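/- For every graph G, the walk-nonrepetitive chromatic number satisfies σ(G) ≤ ρ(G) · χ(G²), where ρ(G) is the stroll-nonrepetitive chromatic number and χ(G²) is the chromatic number of the square of G. -/

import Mathlib

/-- `v 0, …, v (n-1)` is a walk in `G`. -/
def IsWalkSeq {V : Type*} (G : SimpleGraph V) (n : ℕ) (v : ℕ → V) : Prop :=
  ∀ i, i + 1 < n → G.Adj (v i) (v (i + 1))

/-- A colouring is walk-nonrepetitive if every repetitively coloured walk is boring. -/
def WalkNonrepetitive {V C : Type*} (G : SimpleGraph V) (φ : V → C) : Prop :=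
  ∀ t : ℕ, 0 < t → ∀ v : ℕ → V, IsWalkSeq G (2 * t) v →
    (∀ i < t, φ (v i) = φ (v (t + i))) → ∀ i < t, v i = v (t + i)

/-- A colouring is stroll-nonrepetitive if no stroll is repetitively coloured. -/
def StrollNonrepetitive {V C : Type*} (G : SimpleGraph V) (φ : V → C) : Prop :=
  ∀ t : ℕ, 0 < t → ∀ v : ℕ → V, IsWalkSeq G (2 * t) v →
    (∀ i < t, v i ≠ v (t + i)) → ∃ i < t, φ (v i) ≠ φ (v (t + i))

/-- Adjacency in the square `G²`: distinct vertices at distance at most 2. -/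
def SquareAdj {V : Type*} (G : SimpleGraph V) (u w : V) : Prop :=
  u ≠ w ∧ (G.Adj u w ∨ ∃ x, G.Adj u x ∧ G.Adj x w)

/-- `σ(G) ≤ ρ(G) · χ(G²)`: given a stroll-nonrepetitive colouring with `a` colours
and a proper colouring of the square `G²` with `b` colours, there is a
walk-nonrepetitive colouring with `a·b` colours. -/
theorem sigma_le_rho_mul_chi_square {V : Type*} (G : SimpleGraph V) (a b : ℕ)
    (h₁ : ∃ φ : V → Fin a, StrollNonrepetitive G φ)
    (h₂ : ∃ ψ : V → Fin b, ∀ u w : V, SquareAdj G u w → ψ u ≠ ψ w) :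
    ∃ χ : V → Fin (a * b), WalkNonrepetitive G χ := by
  obtain ⟨φ, hφ⟩ := h₁
  obtain ⟨ψ, hψ⟩ := h₂
  refine ⟨fun v => finProdFinEquiv (φ v, ψ v), ?_⟩
  intro t ht v hw hcol
  have hpair : ∀ i < t, φ (v i) = φ (v (t + i)) ∧ ψ (v i) = ψ (v (t + i)) := by
    intro i hi
    have h := finProdFinEquiv.injective (hcol i hi)
    exact ⟨congrArg Prod.fst h, congrArg Prod.snd h⟩
  have hφc : ∀ i < t, φ (v i) = φ (v (t + i)) := fun i hi => (hpair i hi).1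
  have hψc : ∀ i < t, ψ (v i) = ψ (v (t + i)) := fun i hi => (hpair i hi).2
  -- forward propagation of equality
  have step : ∀ i, i + 1 < t → v i = v (t + i) → v (i + 1) = v (t + (i + 1)) := by
    intro i hi heq
    by_contra hne
    apply hψ (v (i + 1)) (v (t + (i + 1)))
    · refine ⟨hne, Or.inr ⟨v i, (hw i (by omega)).symm, ?_⟩⟩
      rw [heq]
      have := hw (t + i) (by omega)
      convert this using 2
      omega
    · exact hψc (i + 1) hi
  -- backward propagation of equality
  have stepback : ∀ i, i + 1 < t → v (i + 1) = v (t + (i + 1)) → v i = v (t + i) := by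
    intro i hi heq
    by_contra hne
    apply hψ (v i) (v (t + i))
    · refine ⟨hne, Or.inr ⟨v (i + 1), hw i (by omega), ?_⟩⟩
      rw [heq]
      have := (hw (t + i) (by omega)).symm
      convert this using 2
      omega
    · exact hψc i (by omega)
  intro i hi
  by_contra hne0
  -- inequality propagates everywhere
  have up : ∀ d, i + d < t → v (i + d) ≠ v (t + (i + d)) := by
    intro d
    induction d with
    | zero => intro _ h; exact hne0 h
    | succ d ih =>
      intro hd h
      exact ih (by omega) (stepback (i + d) (by omega) (by simpa [Nat.add_assoc] using h))
  have down : ∀ d, d ≤ i → v (i - d) ≠ v (t + (i - d)) := by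
    intro d
    induction d with
    | zero => intro _ h; exact hne0 h
    | succ d ih =>
      intro hd h
      apply ih (by omega)
      have : i - d = (i - (d + 1)) + 1 := by omega
      rw [this]
      exact step (i - (d + 1)) (by omega) h
  have allne : ∀ j < t, v j ≠ v (t + j) := by
    intro j hj
    rcases le_or_gt i j with h | h
    · have := up (j - i) (by omega); simpa [Nat.add_sub_cancel' h] using this
    · have := down (i - j) (by omega)
      have e : i - (i - j) = j := by omega
      rwa [e] at this
  obtain ⟨j, hj, hne⟩ := hφ t ht v hw allne
  exact hne (hφc j hj)
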